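/- arXiv:1705.00531 — 3 statements merged into one kernel-verified Lean document; each statement's English description precedes it below -/
import Mathlib

section
/- Let P be a set of primes such that the sum of reciprocals of elements of P diverges. Then the set A = {n ∈ ℕ : for all p ∈ P, if p divides n then p² divides n} has natural density zero. -/
open Filter

/-- Modular equivalence modulo a product of pairwise coprime moduli. -/
lemma modEq_prod_of_forall {ι : Type*} (S : Finset ι) (f : ι → ℕ)
    (hco : (S : Set ι).Pairwise fun i j => Nat.Coprime (f i) (f j))
    {n m : ℕ} (h : ∀ i ∈ S, n ≡ m [MOD f i]) : n ≡ m [MOD ∏ i ∈ S, f i] := by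
  classical
  induction S using Finset.induction_on with
  | empty => simpa using Nat.modEq_one
  | @insert a s hnotmem ih =>
    rw [Finset.prod_insert hnotmem]
    have hc : Nat.Coprime (f a) (∏ i ∈ s, f i) := by
      apply Nat.Coprime.prod_right
      intro i hi
      exact hco (by simp) (by simp [hi]) (by rintro rfl; exact hnotmem hi)
    rw [Nat.modEq_and_modEq_iff_modEq_mul hc |>.symm]
    refine ⟨h a (by simp), ih ?_ fun i hi => h i (by simp [hi])⟩
    exact hco.mono (by simp [Finset.subset_insert, Finset.coe_subset])

lemma good_card_le (p : ℕ) (hp : p.Prime) :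
    ((Finset.range (p ^ 2)).filter (fun r => p ∣ r → p ^ 2 ∣ r)).card ≤ p ^ 2 - p + 1 := by
  classical
  have hbad : ((Finset.Icc 1 (p - 1)).image (fun k => p * k)) ⊆
      (Finset.range (p ^ 2)).filter (fun r => ¬ (p ∣ r → p ^ 2 ∣ r)) := by
    intro r hr
    simp only [Finset.mem_image, Finset.mem_Icc] at hr
    obtain ⟨k, ⟨hk1, hk2⟩, rfl⟩ := hr
    have hp2 := hp.two_le
    have hklt : k < p := lt_of_le_of_lt hk2 (by omega)
    have hlt : p * k < p ^ 2 := by nlinarith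
    simp only [Finset.mem_filter, Finset.mem_range, Classical.not_imp]
    refine ⟨hlt, ⟨k, rfl⟩, ?_⟩
    intro hdvd
    have : p ^ 2 ≤ p * k := Nat.le_of_dvd (Nat.mul_pos (by omega) (by omega)) hdvd
    omega
  have hbadcard : p - 1 ≤ ((Finset.range (p ^ 2)).filter (fun r => ¬ (p ∣ r → p ^ 2 ∣ r))).card := by
    calc p - 1 = (Finset.Icc 1 (p-1)).card := by simp
    _ = ((Finset.Icc 1 (p - 1)).image (fun k => p * k)).card := by
        rw [Finset.card_image_of_injective]
        exact fun a b h => by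
          have hp0 : p ≠ 0 := hp.ne_zero
          exact Nat.eq_of_mul_eq_mul_left (Nat.pos_of_ne_zero hp0) h
    _ ≤ _ := Finset.card_le_card hbad
  have := Finset.card_filter_add_card_filter_not
    (s := Finset.range (p ^ 2)) (p := fun r => p ∣ r → p ^ 2 ∣ r)
  rw [Finset.card_range] at this
  have hp2 := hp.two_le
  omega

lemma count_bound (S : Finset ℕ) (hSp : ∀ p ∈ S, Nat.Prime p) (hSd : True) (N : ℕ) :
    (((Finset.Icc 1 N).filter (fun n => ∀ p ∈ S, p ∣ n → p ^ 2 ∣ n)).card)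
      ≤ (N / (∏ p ∈ S, p ^ 2) + 1) * ∏ p ∈ S, (p ^ 2 - p + 1) := by
  classical
  set M := ∏ p ∈ S, p ^ 2 with hM
  have key := Finset.card_le_card_of_injOn
    (f := fun n => (n / M, fun p (_ : p ∈ S) => n % p ^ 2))
    (s := (Finset.Icc 1 N).filter (fun n => ∀ p ∈ S, p ∣ n → p ^ 2 ∣ n))
    (t := (Finset.Icc 0 (N / M)) ×ˢ
        (S.pi fun p => (Finset.range (p ^ 2)).filter (fun r => p ∣ r → p ^ 2 ∣ r)))
    ?_ ?_
  · calc _ ≤ _ := key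
    _ = (N / M + 1) * ∏ p ∈ S, ((Finset.range (p ^ 2)).filter (fun r => p ∣ r → p ^ 2 ∣ r)).card := by
        rw [Finset.card_product, Finset.card_pi]
        simp [Nat.card_Icc]
    _ ≤ _ := by
        apply Nat.mul_le_mul_left
        exact Finset.prod_le_prod' fun p hp => good_card_le p (hSp p hp)
  · -- maps to
    intro n hn
    simp only [Finset.mem_coe, Finset.mem_filter, Finset.mem_Icc] at hn
    obtain ⟨⟨hn1, hnN⟩, hcond⟩ := hn
    simp only [Finset.mem_coe, Finset.mem_product, Finset.mem_Icc, Finset.mem_pi, Finset.mem_filter,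
      Finset.mem_range]
    refine ⟨⟨Nat.zero_le _, Nat.div_le_div_right hnN⟩, fun p hp => ?_⟩
    have hpp := hSp p hp
    have hppos : 0 < p ^ 2 := by have := hpp.pos; positivity
    refine ⟨Nat.mod_lt _ hppos, fun hdvd => ?_⟩
    have hpn : p ∣ n := (Nat.dvd_mod_iff (dvd_pow_self p two_ne_zero)).mp hdvd
    have : p ^ 2 ∣ n := hcond p hp hpn
    exact (Nat.dvd_mod_iff dvd_rfl).mpr this
  · -- injective
    intro n hn m hm heq
    simp only [Prod.mk.injEq] at heq
    obtain ⟨hdiv, hmod⟩ := heq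
    have hmodM : n ≡ m [MOD M] := by
      apply modEq_prod_of_forall S (fun p => p ^ 2)
      · intro i hi j hj hne
        exact Nat.Coprime.pow _ _ ((Nat.coprime_primes (hSp i hi) (hSp j hj)).mpr hne)
      · intro p hp
        exact congrFun (congrFun hmod p) hp
    have h1 : n % M = m % M := hmodM
    calc n = M * (n / M) + n % M := (Nat.div_add_mod n M).symm
    _ = M * (m / M) + m % M := by rw [hdiv, h1]
    _ = m := Nat.div_add_mod m M

lemma exists_good_finset (P : Set ℕ) (hP : ∀ p ∈ P, Nat.Prime p)
    (hdiv : ¬ Summable (fun p : P => (1 : ℝ) / (p : ℝ))) {ε : ℝ} (hε : 0 < ε) :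
    ∃ S : Finset ℕ, (∀ p ∈ S, p ∈ P) ∧
      ((∏ p ∈ S, (p ^ 2 - p + 1) : ℕ) : ℝ) / ((∏ p ∈ S, p ^ 2 : ℕ) : ℝ) < ε := by
  classical
  set C : ℝ := max 0 (-2 * Real.log ε) with hC
  obtain ⟨u, hu⟩ : ∃ u : Finset ↥P, C < ∑ p ∈ u, (1 : ℝ) / (p : ℝ) := by
    by_contra h
    push_neg at h
    exact hdiv (summable_of_sum_le (fun p => by positivity) h)
  refine ⟨u.image Subtype.val, by simp; exact fun p hp _ => hp, ?_⟩
  set S := u.image Subtype.val with hS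
  have hSP : ∀ p ∈ S, p ∈ P := by simp [hS]; exact fun p hp _ => hp
  have hSp : ∀ p ∈ S, Nat.Prime p := fun p hp => hP p (hSP p hp)
  have hsum : ∑ p ∈ S, (1 : ℝ) / (p : ℝ) = ∑ p ∈ u, (1 : ℝ) / (p : ℝ) :=
    Finset.sum_image (fun a _ b _ h => Subtype.coe_injective h)
  have hfactor : ∀ p ∈ S, (((p ^ 2 - p + 1 : ℕ) : ℝ) / ((p ^ 2 : ℕ) : ℝ))
      ≤ Real.exp (-(1 / (2 * (p : ℝ)))) := by
    intro p hp
    have hp2 := (hSp p hp).two_le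
    have hpR : (2 : ℝ) ≤ (p : ℝ) := by exact_mod_cast hp2
    have hcast : ((p ^ 2 - p + 1 : ℕ) : ℝ) = (p : ℝ) ^ 2 - (p : ℝ) + 1 := by
      have hle : p ≤ p ^ 2 := Nat.le_self_pow two_ne_zero p
      push_cast [hle]
      ring
    have hppos : (0 : ℝ) < (p : ℝ) ^ 2 := by positivity
    rw [hcast]
    push_cast
    have h1 : ((p : ℝ) ^ 2 - (p : ℝ) + 1) / ((p : ℝ) ^ 2) = 1 - ((p : ℝ) - 1) / (p : ℝ) ^ 2 := by
      field_simp
      ring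
    rw [h1]
    have h2 : 1 - ((p : ℝ) - 1) / (p : ℝ) ^ 2 ≤ Real.exp (-(((p : ℝ) - 1) / (p : ℝ) ^ 2)) := by
      have := Real.add_one_le_exp (-(((p : ℝ) - 1) / (p : ℝ) ^ 2))
      linarith
    refine h2.trans (Real.exp_le_exp.mpr ?_)
    rw [neg_le_neg_iff, div_le_div_iff₀ (by positivity) hppos]
    nlinarith
  have hnonneg : ∀ p ∈ S, (0 : ℝ) ≤ ((p ^ 2 - p + 1 : ℕ) : ℝ) / ((p ^ 2 : ℕ) : ℝ) := by
    intro p _; positivity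
  have hprodle : ∏ p ∈ S, (((p ^ 2 - p + 1 : ℕ) : ℝ) / ((p ^ 2 : ℕ) : ℝ))
      ≤ Real.exp (∑ p ∈ S, -(1 / (2 * (p : ℝ)))) := by
    rw [Real.exp_sum]
    exact Finset.prod_le_prod hnonneg hfactor
  have hsum2 : (∑ p ∈ S, -(1 / (2 * (p : ℝ)))) = -(1 / 2) * ∑ p ∈ S, (1 : ℝ) / (p : ℝ) := by
    rw [Finset.mul_sum]
    apply Finset.sum_congr rfl
    intro p hp
    have : (p : ℝ) ≠ 0 := by
      have := (hSp p hp).pos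
      positivity
    field_simp
  have hlt : Real.exp (∑ p ∈ S, -(1 / (2 * (p : ℝ)))) < ε := by
    rw [hsum2, hsum]
    calc Real.exp (-(1 / 2) * ∑ p ∈ u, (1 : ℝ) / (p : ℝ))
        < Real.exp (Real.log ε) := by
          apply Real.exp_lt_exp.mpr
          have hClog : -2 * Real.log ε ≤ C := le_max_right _ _
          nlinarith
    _ = ε := Real.exp_log hε
  calc ((∏ p ∈ S, (p ^ 2 - p + 1) : ℕ) : ℝ) / ((∏ p ∈ S, p ^ 2 : ℕ) : ℝ)
      = ∏ p ∈ S, (((p ^ 2 - p + 1 : ℕ) : ℝ) / ((p ^ 2 : ℕ) : ℝ)) := by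
        rw [Finset.prod_div_distrib]
        push_cast
        ring
  _ ≤ _ := hprodle
  _ < ε := hlt

theorem density_zero_of_divergent_primes
    (P : Set ℕ) (hP : ∀ p ∈ P, Nat.Prime p)
    (hdiv : ¬ Summable (fun p : P => (1 : ℝ) / (p : ℝ)))
    (A : Set ℕ) (hA : A = {n : ℕ | ∀ p ∈ P, p ∣ n → p ^ 2 ∣ n}) :
    Tendsto (fun N : ℕ => (Nat.card ↥(A ∩ Set.Icc 1 N) : ℝ) / N) atTop (nhds 0) := by
  classical
  subst hA
  rw [NormedAddCommGroup.tendsto_nhds_zero]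
  intro ε hε
  obtain ⟨S, hSP, hSlt⟩ := exists_good_finset P hP hdiv (half_pos hε)
  have hSp : ∀ p ∈ S, Nat.Prime p := fun p hp => hP p (hSP p hp)
  set K : ℕ := ∏ p ∈ S, (p ^ 2 - p + 1) with hK
  set M : ℕ := ∏ p ∈ S, p ^ 2 with hM
  have hM0 : 0 < M := Finset.prod_pos fun p hp => by have := (hSp p hp).pos; positivity
  have hMR : (0 : ℝ) < (M : ℝ) := by exact_mod_cast hM0
  have htail : Tendsto (fun N : ℕ => (K : ℝ) / N) atTop (nhds 0) :=
    tendsto_const_nhds.div_atTop tendsto_natCast_atTop_atTop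
  have hev : ∀ᶠ N : ℕ in atTop, (K : ℝ) / N < ε / 2 :=
    htail.eventually (gt_mem_nhds (half_pos hε))
  filter_upwards [hev, eventually_ge_atTop 1] with N hKN hN1
  have hNR : (0 : ℝ) < (N : ℝ) := by exact_mod_cast hN1
  -- cardinality bound
  have hsub : {n : ℕ | ∀ p ∈ P, p ∣ n → p ^ 2 ∣ n} ∩ Set.Icc 1 N ⊆
      ↑((Finset.Icc 1 N).filter (fun n => ∀ p ∈ S, p ∣ n → p ^ 2 ∣ n)) := by
    rintro n ⟨hnA, hn1, hnN⟩
    simp only [Finset.coe_filter, Set.mem_setOf_eq, Finset.mem_Icc]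
    exact ⟨⟨hn1, hnN⟩, fun p hp => hnA p (hSP p hp)⟩
  have hcard1 : Nat.card ↥({n : ℕ | ∀ p ∈ P, p ∣ n → p ^ 2 ∣ n} ∩ Set.Icc 1 N)
      ≤ ((Finset.Icc 1 N).filter (fun n => ∀ p ∈ S, p ∣ n → p ^ 2 ∣ n)).card := by
    rw [Nat.card_coe_set_eq, ← Set.ncard_coe_finset]
    exact Set.ncard_le_ncard hsub (Finset.finite_toSet _)
  have hcard2 := count_bound S hSp trivial N
  have hcard : Nat.card ↥({n : ℕ | ∀ p ∈ P, p ∣ n → p ^ 2 ∣ n} ∩ Set.Icc 1 N)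
      ≤ (N / M + 1) * K := le_trans hcard1 hcard2
  rw [Real.norm_eq_abs, abs_of_nonneg (by positivity)]
  calc (Nat.card ↥({n : ℕ | ∀ p ∈ P, p ∣ n → p ^ 2 ∣ n} ∩ Set.Icc 1 N) : ℝ) / N
      ≤ (((N / M + 1) * K : ℕ) : ℝ) / N := by
        gcongr
  _ = (((N / M : ℕ) : ℝ) + 1) * (K : ℝ) / N := by push_cast; ring
  _ ≤ ((N : ℝ) / (M : ℝ) + 1) * (K : ℝ) / N := by
        gcongr
        exact Nat.cast_div_le
  _ = (K : ℝ) / M + (K : ℝ) / N := by field_simp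
  _ < ε / 2 + ε / 2 := by
        apply add_lt_add _ hKN
        calc (K : ℝ) / M = (K : ℝ) / (M : ℝ) := rfl
        _ < ε / 2 := by
            have : ((∏ p ∈ S, (p ^ 2 - p + 1) : ℕ) : ℝ) / ((∏ p ∈ S, p ^ 2 : ℕ) : ℝ) < ε / 2 := hSlt
            simpa [hK, hM] using this
  _ = ε := by ring
end

section
/- Let P be a set of primes, let p₁, ..., p_N be distinct elements of P, and let A = {n ∈ ℕ : for all p ∈ P, if p divides n then p² divides n}. Then the upper natural density of A is at most ∏_{i=1}^N (p_i² - (p_i - 1))/p_i². -/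
open Filter
-- standalone aux lemma
theorem auxTcard (pi : ℕ) (h2 : 2 ≤ pi) [DecidablePred (fun r => r = 0 ∨ ¬ pi ∣ r)] :
    ((Finset.range (pi ^ 2)).filter (fun r => r = 0 ∨ ¬ pi ∣ r)).card = pi ^ 2 - (pi - 1) := by
  classical
  rw [Finset.filter_congr_decidable]
  have hsplit := Finset.card_filter_add_card_filter_not
    (s := Finset.range (pi ^ 2)) (p := fun r => r = 0 ∨ ¬ pi ∣ r)
  rw [Finset.card_range] at hsplit
  have hC : ((Finset.range (pi ^ 2)).filter (fun r => ¬(r = 0 ∨ ¬ pi ∣ r))).card = pi - 1 := by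
    have himg : (Finset.range (pi ^ 2)).filter (fun r => ¬(r = 0 ∨ ¬ pi ∣ r))
        = (Finset.Ico 1 pi).image (fun k => k * pi) := by
      ext r
      simp only [Finset.mem_filter, Finset.mem_range, Finset.mem_image, Finset.mem_Ico,
        not_or, not_not]
      constructor
      · rintro ⟨hr, hr0, k, rfl⟩
        refine ⟨k, ⟨?_, ?_⟩, by ring⟩
        · rcases Nat.eq_zero_or_pos k with h | h
          · subst h; simp at hr0
          · exact h
        · have : pi * k < pi * pi := by rwa [pow_two] at hr
          exact Nat.lt_of_mul_lt_mul_left this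
      · rintro ⟨k, ⟨hk1, hk2⟩, rfl⟩
        refine ⟨?_, ?_, k, by ring⟩
        · calc k * pi < pi * pi := Nat.mul_lt_mul_of_lt_of_le hk2 le_rfl (by omega)
            _ = pi ^ 2 := (pow_two _).symm
        · positivity
    rw [himg, Finset.card_image_of_injective _ (fun a b h =>
      Nat.eq_of_mul_eq_mul_right (by omega) h), Nat.card_Ico]
  rw [hC] at hsplit
  omega


theorem auxLimsup (count : ℕ → ℕ) (K m : ℕ) (hm : 0 < m)
    (key : ∀ M, count M ≤ (M / m + 1) * K) :
    limsup (fun M : ℕ => (count M : ℝ) / M) atTop ≤ (K : ℝ) / (m : ℝ) := by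
  have hm0 : (0 : ℝ) < m := by exact_mod_cast hm
  set c : ℝ := (K : ℝ) / (m : ℝ) with hc
  have hg : Tendsto (fun M : ℕ => c + (K : ℝ) * (1 / (M : ℝ))) atTop (nhds c) := by
    have h0 : Tendsto (fun M : ℕ => (K : ℝ) * (1 / (M : ℝ))) atTop (nhds 0) := by
      simpa using (tendsto_one_div_atTop_nhds_zero_nat).const_mul (K : ℝ)
    simpa using tendsto_const_nhds.add h0
  have hev : ∀ᶠ M in atTop, (count M : ℝ) / M ≤ c + (K : ℝ) * (1 / (M : ℝ)) := by
    filter_upwards [eventually_ge_atTop 1] with M hM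
    have hM0 : (0 : ℝ) < M := by exact_mod_cast hM
    have hcount : (count M : ℝ) ≤ ((M / m : ℕ) + 1) * K := by exact_mod_cast key M
    have hdiv : ((M / m : ℕ) : ℝ) ≤ (M : ℝ) / (m : ℝ) := Nat.cast_div_le
    calc (count M : ℝ) / M ≤ (((M / m : ℕ) + 1) * K) / M := by gcongr
      _ ≤ (((M : ℝ) / (m : ℝ) + 1) * K) / M := by
          gcongr
      _ = c + (K : ℝ) * (1 / (M : ℝ)) := by rw [hc]; field_simp
  have hcb : Filter.IsCoboundedUnder (· ≤ ·) atTop (fun M : ℕ => (count M : ℝ) / M) :=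
    Filter.isCoboundedUnder_le_of_le atTop
      (fun M => div_nonneg (Nat.cast_nonneg _) (Nat.cast_nonneg _))
  calc limsup (fun M : ℕ => (count M : ℝ) / M) atTop
      ≤ limsup (fun M : ℕ => c + (K : ℝ) * (1 / (M : ℝ))) atTop :=
        limsup_le_limsup hev hcb hg.isBoundedUnder_le
    _ = c := hg.limsup_eq

theorem upper_density_le_prod
    (P : Set ℕ) (hP : ∀ p ∈ P, Nat.Prime p)
    (N : ℕ) (p : Fin N → ℕ) (hmem : ∀ i, p i ∈ P) (hinj : Function.Injective p)
    (A : Set ℕ) (hA : A = {n : ℕ | ∀ q ∈ P, q ∣ n → q ^ 2 ∣ n}) :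
    limsup (fun M : ℕ => (Nat.card ↥(A ∩ Set.Icc 1 M) : ℝ) / M) atTop
      ≤ ∏ i : Fin N, (((p i) ^ 2 - ((p i) - 1) : ℝ) / ((p i) ^ 2 : ℝ)) := by
  classical
  set m : ℕ := ∏ i : Fin N, (p i) ^ 2 with hmdef
  have hp2 : ∀ i, 2 ≤ p i := fun i => (hP _ (hmem i)).two_le
  have hm : 0 < m := Finset.prod_pos (fun i _ => pow_pos (hP _ (hmem i)).pos 2)
  set T : Fin N → Finset ℕ :=
    fun i => (Finset.range ((p i) ^ 2)).filter (fun r => r = 0 ∨ ¬ p i ∣ r) with hTdef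
  set K : ℕ := ∏ i : Fin N, (T i).card with hKdef
  -- cardinality of allowed residues
  have hTcard : ∀ i, (T i).card = (p i) ^ 2 - (p i - 1) := by
    intro i
    simp only [hTdef]
    exact auxTcard (p i) (hp2 i)
  -- coprimality of the p i ^ 2 over ℤ
  have hcop : ∀ i j : Fin N, i ≠ j → IsCoprime ((p i) ^ 2 : ℤ) ((p j) ^ 2 : ℤ) := by
    intro i j hij
    have hc : Nat.Coprime (p i) (p j) :=
      (Nat.coprime_primes (hP _ (hmem i)) (hP _ (hmem j))).mpr (fun h => hij (hinj h))
    exact_mod_cast Nat.isCoprime_iff_coprime.mpr (Nat.Coprime.pow 2 2 hc)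
  -- the key counting bound
  have key : ∀ M : ℕ, Nat.card ↥(A ∩ Set.Icc 1 M) ≤ (M / m + 1) * K := by
    intro M
    set F : Finset ℕ := (Finset.Icc 1 M).filter (· ∈ A) with hF
    have hset : (A ∩ Set.Icc 1 M : Set ℕ) = ↑F := by
      ext n
      simp only [hF, Finset.coe_filter, Finset.mem_Icc, Set.mem_inter_iff, Set.mem_Icc,
        Set.mem_setOf_eq]
      tauto
    rw [hset, Nat.card_coe_set_eq, Set.ncard_coe_finset]
    have hle : F.card ≤ ((Finset.range (M / m + 1)) ×ˢ Fintype.piFinset T).card := by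
      apply Finset.card_le_card_of_injOn (fun n => (n / m, fun i => n % (p i) ^ 2))
      · intro n hn
        simp only [hF, Finset.coe_filter, Set.mem_setOf_eq, Finset.mem_filter, Finset.mem_Icc] at hn
        obtain ⟨⟨hn1, hnM⟩, hnA⟩ := hn
        simp only [Finset.mem_coe, Finset.mem_product, Finset.mem_range, Fintype.mem_piFinset]
        refine ⟨lt_of_le_of_lt (Nat.div_le_div_right hnM) (Nat.lt_succ_self _), ?_⟩
        intro i
        have hq : 0 < (p i) ^ 2 := pow_pos (hP _ (hmem i)).pos 2
        simp only [hTdef, Finset.mem_filter, Finset.mem_range]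
        refine ⟨Nat.mod_lt _ hq, ?_⟩
        by_cases hd : p i ∣ n
        · left
          have hdvd2 : (p i) ^ 2 ∣ n := by
            rw [hA] at hnA
            exact hnA (p i) (hmem i) hd
          exact Nat.mod_eq_zero_of_dvd hdvd2
        · right
          intro hcon
          exact hd ((Nat.dvd_mod_iff (dvd_pow_self (p i) two_ne_zero)).mp hcon)
      · intro a ha b hb hab
        have h1 : a / m = b / m := congrArg Prod.fst hab
        have h2 : ∀ i, a % (p i) ^ 2 = b % (p i) ^ 2 :=
          fun i => congrFun (congrArg Prod.snd hab) i
        have hdvd : (m : ℤ) ∣ (b : ℤ) - (a : ℤ) := by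
          have hprod : (∏ i : Fin N, ((p i) ^ 2 : ℤ)) ∣ (b : ℤ) - (a : ℤ) := by
            apply Finset.prod_dvd_of_coprime
            · intro i _ j _ hij
              exact hcop i j hij
            · intro i _
              exact Nat.modEq_iff_dvd.mp (h2 i)
          have : ((m : ℕ) : ℤ) = ∏ i : Fin N, ((p i) ^ 2 : ℤ) := by
            rw [hmdef]; push_cast; ring
          rwa [this]
        have hmod : a % m = b % m := Nat.modEq_iff_dvd.mpr hdvd
        calc a = m * (a / m) + a % m := (Nat.div_add_mod a m).symm
          _ = m * (b / m) + b % m := by rw [h1, hmod]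
          _ = b := Nat.div_add_mod b m
    rw [Finset.card_product, Finset.card_range, Fintype.card_piFinset] at hle
    rwa [hKdef]
  have hlim : limsup (fun M : ℕ => (Nat.card ↥(A ∩ Set.Icc 1 M) : ℝ) / M) atTop
      ≤ (K : ℝ) / (m : ℝ) :=
    auxLimsup (fun M => Nat.card ↥(A ∩ Set.Icc 1 M)) K m hm key
  refine hlim.trans_eq ?_
  rw [hKdef, hmdef]
  push_cast
  rw [← Finset.prod_div_distrib]
  apply Finset.prod_congr rfl
  intro i _
  have h2 := hp2 i
  have h1 : p i - 1 ≤ (p i) ^ 2 := by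
    calc p i - 1 ≤ p i := Nat.sub_le _ _
      _ ≤ (p i) ^ 2 := Nat.le_self_pow two_ne_zero _
  rw [hTcard i, Nat.cast_sub h1, Nat.cast_sub (by omega : 1 ≤ p i)]
  push_cast
  ring
end

section
/- Let G be a finite group and H a proper subgroup. Then the cardinality of the union ⋃_{x ∈ G} xHx⁻¹ is strictly less than |G|. -/
open Set Subgroup

theorem card_union_conjugates_lt
    (G : Type*) [Group G] [Finite G] (H : Subgroup G) (hH : H ≠ ⊤) :
    Nat.card ↥(⋃ x : G, (fun h => x * h * x⁻¹) '' (H : Set G)) < Nat.card G := by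
  classical
  have : Fintype G := Fintype.ofFinite G
  set N := Subgroup.normalizer (H : Set G) with hN
  set C : G → Set G := fun x => (fun h => x * h * x⁻¹) '' (H : Set G) with hCdef
  have hmem : ∀ x g : G, g ∈ C x ↔ x⁻¹ * g * x ∈ H := by
    intro x g
    constructor
    · rintro ⟨h, hh, rfl⟩; simpa [mul_assoc] using hh
    · intro hg; exact ⟨x⁻¹ * g * x, hg, by group⟩
  have hkey : ∀ x y : G, x⁻¹ * y ∈ N → C x = C y := by
    intro x y hn
    ext g
    rw [hmem, hmem]
    have h2 := Subgroup.mem_normalizer_iff''.mp hn (x⁻¹ * g * x)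
    constructor
    · intro h
      have := h2.mp h
      convert this using 1; group
    · intro h
      apply h2.mpr
      convert h using 1; group
  have hone : ∀ x : G, (1 : G) ∈ C x := fun x => ⟨1, H.one_mem, by group⟩
  have hcardC : ∀ x : G, (C x).ncard = Nat.card H := by
    intro x
    have hinj : Function.Injective (fun h : G => x * h * x⁻¹) := by
      intro a b hab
      simpa using mul_left_cancel (mul_right_cancel hab)
    rw [hCdef]
    simp only
    rw [Set.ncard_image_of_injective _ hinj, ← Nat.card_coe_set_eq]
    simp [Nat.card_congr (Equiv.setCongr rfl)]
  -- reduce to quotient-indexed union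
  set S : Set G := ⋃ x : G, C x with hS
  have hsub : S.toFinset ⊆ insert (1 : G)
      ((Finset.univ : Finset (G ⧸ N)).biUnion fun q =>
        (C (Quotient.out q)).toFinset.erase 1) := by
    intro g hg
    rw [Set.mem_toFinset] at hg
    by_cases hg1 : g = 1
    · simp [hg1]
    · obtain ⟨x, hx⟩ := Set.mem_iUnion.mp hg
      refine Finset.mem_insert_of_mem (Finset.mem_biUnion.mpr ⟨QuotientGroup.mk x, Finset.mem_univ _, ?_⟩)
      have hx' : C x = C (Quotient.out (QuotientGroup.mk (s := N) x)) := by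
        apply hkey
        have : (QuotientGroup.mk (s := N) x) = QuotientGroup.mk (Quotient.out (QuotientGroup.mk (s := N) x)) := by
          rw [QuotientGroup.out_eq']
        exact (QuotientGroup.eq (s := N)).mp this
      rw [Finset.mem_erase, Set.mem_toFinset]
      exact ⟨hg1, hx' ▸ hx⟩
  have hcard_erase : ∀ q : G ⧸ N,
      ((C (Quotient.out q)).toFinset.erase 1).card = Nat.card H - 1 := by
    intro q
    rw [Finset.card_erase_of_mem (Set.mem_toFinset.mpr (hone _))]
    rw [← Set.ncard_eq_toFinset_card', hcardC]
  -- counting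
  have hbound : S.toFinset.card ≤ 1 + Nat.card (G ⧸ N) * (Nat.card H - 1) := by
    calc S.toFinset.card ≤ _ := Finset.card_le_card hsub
      _ ≤ 1 + ((Finset.univ : Finset (G ⧸ N)).biUnion fun q =>
            (C (Quotient.out q)).toFinset.erase 1).card := by
          exact Finset.card_insert_le _ _ |>.trans (by omega)
      _ ≤ 1 + ∑ q : G ⧸ N, ((C (Quotient.out q)).toFinset.erase 1).card := by
          exact Nat.add_le_add_left (Finset.card_biUnion_le) 1
      _ = 1 + Nat.card (G ⧸ N) * (Nat.card H - 1) := by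
          simp [hcard_erase, Finset.sum_const, Nat.card_eq_fintype_card]
  have hcardS : Nat.card ↥(⋃ x : G, (fun h => x * h * x⁻¹) '' (H : Set G)) = S.toFinset.card := by
    rw [Nat.card_coe_set_eq, Set.ncard_eq_toFinset_card']
  rw [hcardS]
  -- now the arithmetic
  have hHle : Nat.card H ≤ Nat.card N := Subgroup.card_le_of_le Subgroup.le_normalizer
  have hHpos : 0 < Nat.card H := Nat.card_pos
  have hGN : N.index * Nat.card N = Nat.card G := Subgroup.index_mul_card N
  have hidx : Nat.card (G ⧸ N) = N.index := (Subgroup.index_eq_card N).symm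
  by_cases hNtop : N = ⊤
  · -- H normal; union is H itself essentially
    have hCeq : ∀ x : G, C x = C 1 := fun x => (hkey 1 x (by simp [hNtop])).symm
    have hSH : S = C 1 := by
      apply Set.Subset.antisymm
      · exact Set.iUnion_subset fun x => (hCeq x).le
      · exact Set.subset_iUnion C 1
    have h1 : S.toFinset.card = Nat.card H := by
      rw [← Set.ncard_eq_toFinset_card', hSH, hcardC]
    rw [h1]
    have : Nat.card H < Nat.card G := by
      have hlt : (H : Set G) ⊂ Set.univ := by
        rw [Set.ssubset_univ_iff]
        intro h
        exact hH (Subgroup.eq_top_iff' H |>.mpr fun x => by rw [← SetLike.mem_coe, h]; trivial)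
      have := Set.ncard_lt_ncard hlt (Set.finite_univ)
      rwa [Set.ncard_univ, ← Nat.card_coe_set_eq, Nat.card_congr (Equiv.refl _)] at this
    exact this
  · have hidx2 : 2 ≤ N.index := Subgroup.one_lt_index_of_ne_top hNtop
    obtain ⟨m, hm⟩ : ∃ m, Nat.card N = m + 1 :=
      ⟨Nat.card N - 1, by omega⟩
    have hmul : N.index * (Nat.card H - 1) ≤ N.index * m :=
      Nat.mul_le_mul_left _ (by omega)
    have hGeq : Nat.card G = N.index * m + N.index := by
      rw [← hGN, hm]; ring
    rw [hidx] at hbound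
    omega
end
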